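/- A branch group G ≤ Aut(X*) is just-infinite (every nontrivial normal subgroup of G has finite index) if and only if for every word u ∈ X* the rigid stabilizer Rist_G(u) has finite abelianization, i.e., the commutator subgroup [Rist_G(u), Rist_G(u)] has finite index in Rist_G(u). -/

import Mathlib

/-!  Common setup: the group `Aut(X*)` of automorphisms of the rooted binary tree,
the Grigorchuk generators `a, b_ω, c_ω, d_ω`, and the subgroups `G_ω`, `L_ω`. -/

/-- Finite words over `X = {0,1}`: vertices of the rooted binary tree. -/
abbrev Word := List Bool

/-- `Aut(X*)`: bijections of the set of words which preserve word length
(hence fix the empty word) and preserve the prefix relation, as a subgroup of the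
permutation group of `Word`. -/
def TreeAut : Subgroup (Equiv.Perm Word) where
  carrier := {g | (∀ w : Word, (g w).length = w.length) ∧
      ∀ u v : Word, u <+: v ↔ g u <+: g v}
  one_mem' := ⟨fun _ => rfl, fun _ _ => Iff.rfl⟩
  mul_mem' := by
    rintro g h ⟨hg1, hg2⟩ ⟨hh1, hh2⟩
    refine ⟨fun w => ?_, fun u v => ?_⟩
    · simpa using (hg1 (h w)).trans (hh1 w)
    · simpa using (hh2 u v).trans (hg2 (h u) (h v))
  inv_mem' := by
    rintro g ⟨hg1, hg2⟩
    refine ⟨fun w => ?_, fun u v => ?_⟩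
    · have := hg1 (g⁻¹ w)
      rw [Equiv.Perm.coe_inv, Equiv.apply_symm_apply] at this
      exact this.symm
    · have := (hg2 (g⁻¹ u) (g⁻¹ v)).symm
      simpa using this

/-- Application of a tree automorphism to a word. -/
def ap (g : ↥TreeAut) (w : Word) : Word := (g : Equiv.Perm Word) w

/-- The root permutation `a` (as a map): `a(0v) = 1v`, `a(1v) = 0v`. -/
def aFun : Word → Word
  | [] => []
  | x :: v => (!x) :: v

/-- The common recursive pattern of the maps `b_ω, c_ω, d_ω`: on `0v` act by the
identity if `ω 0 = k` and by `a` otherwise, on `1v` recurse with the shifted sequence.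
(`k = 2` gives `b`, `k = 1` gives `c`, `k = 0` gives `d`.) -/
def genFun (k : Fin 3) : (ℕ → Fin 3) → Word → Word
  | _, [] => []
  | ω, false :: v => false :: (if ω 0 = k then v else aFun v)
  | ω, true :: v => true :: genFun k (fun n => ω (n + 1)) v

lemma aFun_invol : Function.Involutive aFun := by
  intro w; cases w with
  | nil => rfl
  | cons x v => simp [aFun]

lemma aFun_length : ∀ w : Word, (aFun w).length = w.length := by
  intro w; cases w <;> simp [aFun]

lemma aFun_prefix : ∀ u v : Word, u <+: v → aFun u <+: aFun v := by
  intro u v h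
  cases u with
  | nil => simp [aFun]
  | cons x u' =>
    cases v with
    | nil => simp at h
    | cons y v' =>
      rw [List.cons_prefix_cons] at h
      obtain ⟨rfl, h2⟩ := h
      simpa [aFun, List.cons_prefix_cons] using h2

lemma genFun_length (k : Fin 3) : ∀ (w : Word) (ω : ℕ → Fin 3),
    (genFun k ω w).length = w.length
  | [], _ => rfl
  | false :: v, ω => by
    by_cases h : ω 0 = k <;> simp [genFun, h, aFun_length]
  | true :: v, ω => by
    simp [genFun, genFun_length k v]

lemma genFun_invol (k : Fin 3) : ∀ (w : Word) (ω : ℕ → Fin 3),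
    genFun k ω (genFun k ω w) = w
  | [], _ => rfl
  | false :: v, ω => by
    by_cases h : ω 0 = k <;> simp [genFun, h, aFun_invol v]
  | true :: v, ω => by
    simp [genFun, genFun_invol k v]

lemma genFun_prefix (k : Fin 3) : ∀ (u v : Word) (ω : ℕ → Fin 3),
    u <+: v → genFun k ω u <+: genFun k ω v
  | [], v, ω, _ => by simp [genFun]
  | x :: u', [], ω, h => by simp at h
  | x :: u', y :: v', ω, h => by
    rw [List.cons_prefix_cons] at h
    obtain ⟨rfl, h2⟩ := h
    cases x with
    | false =>
      by_cases h0 : ω 0 = k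
      · simpa [genFun, h0, List.cons_prefix_cons] using h2
      · simpa [genFun, h0, List.cons_prefix_cons] using aFun_prefix u' v' h2
    | true =>
      simpa [genFun, List.cons_prefix_cons] using genFun_prefix k u' v' _ h2

/-- Build an element of `Aut(X*)` from an involutive, length-preserving,
prefix-preserving map. -/
def mkAut (f : Word → Word) (hinv : Function.Involutive f)
    (hlen : ∀ w, (f w).length = w.length)
    (hpre : ∀ u v : Word, u <+: v → f u <+: f v) : ↥TreeAut :=
  ⟨hinv.toPerm, by
    refine ⟨fun w => ?_, fun u v => ⟨fun h => ?_, fun h => ?_⟩⟩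
    · simpa using hlen w
    · simpa using hpre u v h
    · have := hpre _ _ (by simpa using h)
      simpa [hinv u, hinv v] using this⟩

/-- The automorphism `a`. -/
def aAut : ↥TreeAut := mkAut aFun aFun_invol aFun_length aFun_prefix

/-- The automorphism `b_ω`. -/
def bAut (ω : ℕ → Fin 3) : ↥TreeAut :=
  mkAut (genFun 2 ω) (fun w => genFun_invol 2 w ω) (fun w => genFun_length 2 w ω)
    (fun u v h => genFun_prefix 2 u v ω h)

/-- The automorphism `c_ω`. -/
def cAut (ω : ℕ → Fin 3) : ↥TreeAut :=
  mkAut (genFun 1 ω) (fun w => genFun_invol 1 w ω) (fun w => genFun_length 1 w ω)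
    (fun u v h => genFun_prefix 1 u v ω h)

/-- The automorphism `d_ω`. -/
def dAut (ω : ℕ → Fin 3) : ↥TreeAut :=
  mkAut (genFun 0 ω) (fun w => genFun_invol 0 w ω) (fun w => genFun_length 0 w ω)
    (fun u v h => genFun_prefix 0 u v ω h)

/-- `G_ω = ⟨a, b_ω, c_ω, d_ω⟩`. -/
def Ggrp (ω : ℕ → Fin 3) : Subgroup ↥TreeAut :=
  Subgroup.closure {aAut, bAut ω, cAut ω, dAut ω}

/-- `L_ω = ⟨a b_ω, d_ω⟩`. -/
def Lgrp (ω : ℕ → Fin 3) : Subgroup ↥TreeAut :=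
  Subgroup.closure {aAut * bAut ω, dAut ω}

/-- The `n`-fold shift `σⁿω`. -/
def shift (n : ℕ) (ω : ℕ → Fin 3) : ℕ → Fin 3 := fun m => ω (m + n)

/-- `Ω_∞`: sequences in which each of `0, 1, 2` occurs infinitely often. -/
def OmegaInf : Set (ℕ → Fin 3) := {ω | ∀ k : Fin 3, ∀ N : ℕ, ∃ n, N ≤ n ∧ ω n = k}

/-- `g` fixes every word of length `n`. -/
def fixesLevel (g : ↥TreeAut) (n : ℕ) : Prop := ∀ w : Word, w.length = n → ap g w = w

/-- The subgroup of all tree automorphisms acting trivially outside the subtree `uX*`. -/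
def ristSubgroup (u : Word) : Subgroup ↥TreeAut where
  carrier := {g | ∀ w : Word, ¬ u <+: w → ap g w = w}
  one_mem' := by intro w _; rfl
  mul_mem' := by
    intro g h hg hh w hw
    have e1 : ap g w = w := hg w hw
    have e2 : ap h w = w := hh w hw
    simp only [ap] at e1 e2
    show (g : Equiv.Perm Word) ((h : Equiv.Perm Word) w) = w
    rw [e2, e1]
  inv_mem' := by
    intro g hg w hw
    have h1' : ap g w = w := hg w hw
    have h1 : (g : Equiv.Perm Word) w = w := h1'
    show ((g : Equiv.Perm Word))⁻¹ w = w
    conv_lhs => rw [← h1]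
    simp

/-- The subgroup of all tree automorphisms fixing every word of length `n`
(the `n`-th level stabilizer in `Aut(X*)`). -/
def levelStab (n : ℕ) : Subgroup ↥TreeAut where
  carrier := {g | fixesLevel g n}
  one_mem' := by intro w _; rfl
  mul_mem' := by
    intro g h hg hh w hw
    have e1 : ap g w = w := hg w hw
    have e2 : ap h w = w := hh w hw
    simp only [ap] at e1 e2
    show (g : Equiv.Perm Word) ((h : Equiv.Perm Word) w) = w
    rw [e2, e1]
  inv_mem' := by
    intro g hg w hw
    have h1' : ap g w = w := hg w hw
    have h1 : (g : Equiv.Perm Word) w = w := h1'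
    show ((g : Equiv.Perm Word))⁻¹ w = w
    conv_lhs => rw [← h1]
    simp

/-- The rigid level stabilizer `Rist_G(n)`: the subgroup generated by the rigid vertex
stabilizers `Rist_G(u) = G ⊓ ristSubgroup u` over all words `u` of length `n`. -/
def ristLevel (G : Subgroup ↥TreeAut) (n : ℕ) : Subgroup ↥TreeAut :=
  ⨆ u ∈ {u : Word | u.length = n}, G ⊓ ristSubgroup u

/-- `G` acts transitively on each level of the tree. -/
def LevelTransitive (G : Subgroup ↥TreeAut) : Prop :=
  ∀ u v : Word, u.length = v.length → ∃ g ∈ G, ap g u = v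

/-- A set of tree automorphisms acts level transitively on the subtree `vX*`. -/
def LevelTransitiveOn (S : Set ↥TreeAut) (v : Word) : Prop :=
  ∀ u₁ u₂ : Word, u₁.length = u₂.length → ∃ g ∈ S, ap g (v ++ u₁) = v ++ u₂

/-- `L_{n,ω}`: `L_{0,ω} = L_ω` and `L_{n,ω}` is generated by the squares of
elements of `L_{n-1,ω}`. -/
def Lsq (ω : ℕ → Fin 3) : ℕ → Subgroup ↥TreeAut
  | 0 => Lgrp ω
  | n + 1 => Subgroup.closure {x | ∃ y ∈ Lsq ω n, x = y * y}

/-- `g` is active at the word `v`: the section `g_v` acts nontrivially on the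
one-letter words. -/
def IsActive (g : ↥TreeAut) (v : Word) : Prop :=
  ap g (v ++ [false]) ≠ ap g v ++ [false]

open scoped Classical in
/-- `p(g)_n`: the number of words of length `n` at which `g` is active, mod 2
(words of length `n` are enumerated as `List.ofFn f` for `f : Fin n → Bool`). -/
noncomputable def pMap (g : ↥TreeAut) (n : ℕ) : ZMod 2 :=
  (((Finset.univ : Finset (Fin n → Bool)).filter
    (fun f => IsActive g (List.ofFn f))).card : ZMod 2)


/-! ### Infrastructure for Statement 15 -/

section S15Infra

open Subgroup

lemma ap_mul (g h : ↥TreeAut) (w : Word) : ap (g * h) w = ap g (ap h w) := rfl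

lemma ap_one (w : Word) : ap 1 w = w := rfl

lemma ap_length (g : ↥TreeAut) (w : Word) : (ap g w).length = w.length := g.2.1 w

lemma ap_prefix_iff (g : ↥TreeAut) (u v : Word) : u <+: v ↔ ap g u <+: ap g v := g.2.2 u v

lemma ap_injective (g : ↥TreeAut) : Function.Injective (ap g) :=
  (g : Equiv.Perm Word).injective

lemma ap_inv_ap (g : ↥TreeAut) (w : Word) : ap g⁻¹ (ap g w) = w := by
  simp [ap]

lemma ap_ap_inv (g : ↥TreeAut) (w : Word) : ap g (ap g⁻¹ w) = w := by
  simp [ap]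

lemma treeaut_ext {g h : ↥TreeAut} (H : ∀ w, ap g w = ap h w) : g = h :=
  Subtype.ext (Equiv.ext H)

lemma exists_moved {g : ↥TreeAut} (hg : g ≠ 1) : ∃ w, ap g w ≠ w := by
  by_contra h
  push_neg at h
  exact hg (treeaut_ext fun w => (h w).trans (ap_one w).symm)

lemma not_prefix_of_ne {u v : Word} (h : u.length = v.length) (hne : u ≠ v) : ¬ u <+: v :=
  fun hp => hne (hp.eq_of_length h)

lemma eq_of_prefix_prefix {u v w : Word} (h : u.length = v.length)
    (hu : u <+: w) (hv : v <+: w) : u = v := by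
  rcases List.prefix_or_prefix_of_prefix hu hv with hp | hp
  · exact hp.eq_of_length h
  · exact (hp.eq_of_length h.symm).symm

lemma mem_rist_iff {g : ↥TreeAut} {u : Word} :
    g ∈ ristSubgroup u ↔ ∀ w : Word, ¬ u <+: w → ap g w = w := Iff.rfl

/-- An element of `Rist(u)` fixes `u` itself. -/
lemma rist_apply_self {g : ↥TreeAut} {u : Word} (hg : g ∈ ristSubgroup u) : ap g u = u := by
  rcases List.eq_nil_or_concat' u with rfl | ⟨w, x, rfl⟩
  · have h0 := ap_length g []
    exact List.length_eq_zero_iff.mp (by simpa using h0)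
  · have hw : ap g w = w := hg w (fun hp => by
      have := hp.length_le; simp at this)
    have hsib : ap g (w ++ [!x]) = w ++ [!x] := hg _ (fun hp => by
      have := hp.eq_of_length (by simp)
      simp at this)
    have hpre : w <+: ap g (w ++ [x]) := by
      have h1 : w <+: w ++ [x] := ⟨[x], rfl⟩
      have h2 := (ap_prefix_iff g w (w ++ [x])).mp h1
      rwa [hw] at h2
    obtain ⟨r, hr⟩ := hpre
    have hlen : (ap g (w ++ [x])).length = w.length + 1 := by
      simpa using ap_length g (w ++ [x])
    have hrlen : r.length = 1 := by
      have := congrArg List.length hr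
      simp [hlen] at this
      omega
    obtain ⟨y, rfl⟩ := List.length_eq_one_iff.mp hrlen
    by_cases hxy : y = x
    · rw [hxy] at hr; exact hr.symm
    · exfalso
      have hy : y = !x := by cases x <;> cases y <;> simp_all
      have heq : ap g (w ++ [!x]) = ap g (w ++ [x]) := by rw [hsib, ← hr, hy]
      have := ap_injective g heq
      simp at this

/-- `Rist(u)` preserves the subtree at `u`. -/
lemma rist_prefix {g : ↥TreeAut} {u w : Word} (hg : g ∈ ristSubgroup u) (h : u <+: w) :
    u <+: ap g w := by
  have := (ap_prefix_iff g u w).mp h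
  rwa [rist_apply_self hg] at this

/-- Rigid stabilizers of incomparable vertices commute. -/
lemma rist_commute {u v : Word} {x y : ↥TreeAut} (hx : x ∈ ristSubgroup u)
    (hy : y ∈ ristSubgroup v) (huv : ¬ u <+: v) (hvu : ¬ v <+: u) : Commute x y := by
  have disj : ∀ w : Word, u <+: w → ¬ v <+: w := fun w h1 h2 =>
    (List.prefix_or_prefix_of_prefix h1 h2).elim huv hvu
  have key : ∀ w : Word, ap x (ap y w) = ap y (ap x w) := by
    intro w
    by_cases hu : u <+: w
    · have hv : ¬ v <+: w := disj w hu
      rw [hy w hv]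
      have hux : u <+: ap x w := rist_prefix hx hu
      rw [hy (ap x w) (disj _ hux)]
    · by_cases hv : v <+: w
      · rw [hx w hu]
        have hvy : v <+: ap y w := rist_prefix hy hv
        have : ¬ u <+: ap y w := fun h =>
          (List.prefix_or_prefix_of_prefix h hvy).elim huv hvu
        rw [hx (ap y w) this]
      · rw [hx w hu, hy w hv, hx w hu]
  exact treeaut_ext (fun w => by rw [ap_mul, ap_mul, key w])

/-- Conjugation moves rigid stabilizers around. -/
lemma conj_mem_rist {x y : ↥TreeAut} {u : Word} (hy : y ∈ ristSubgroup u) :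
    x * y * x⁻¹ ∈ ristSubgroup (ap x u) := by
  intro w hw
  rw [ap_mul, ap_mul]
  have h1 : ¬ u <+: ap x⁻¹ w := fun h => by
    have := (ap_prefix_iff x u (ap x⁻¹ w)).mp h
    rw [ap_ap_inv] at this
    exact hw this
  rw [hy _ h1, ap_ap_inv]

/-- The subgroup of automorphisms fixing the subtree at `u` pointwise. -/
def coristSubgroup (u : Word) : Subgroup ↥TreeAut where
  carrier := {g | ∀ w : Word, u <+: w → ap g w = w}
  one_mem' := by intro w _; rfl
  mul_mem' := by
    intro g h hg hh w hw
    have e1 : ap g w = w := hg w hw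
    have e2 : ap h w = w := hh w hw
    simp only [ap] at e1 e2
    show (g : Equiv.Perm Word) ((h : Equiv.Perm Word) w) = w
    rw [e2, e1]
  inv_mem' := by
    intro g hg w hw
    have h1 : (g : Equiv.Perm Word) w = w := hg w hw
    show ((g : Equiv.Perm Word))⁻¹ w = w
    conv_lhs => rw [← h1]
    simp

lemma rist_le_corist {u v : Word} (huv : ¬ u <+: v) (hvu : ¬ v <+: u) :
    ristSubgroup v ≤ coristSubgroup u := fun y hy w hw =>
  hy w (fun h => (List.prefix_or_prefix_of_prefix hw h).elim huv hvu)

end S15Infra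


section S15Phi

open Subgroup
open scoped commutatorElement

variable (G : Subgroup ↥TreeAut)

/-- Words of length `n`, indexed by functions `Fin n → Bool`. -/
def wd {n : ℕ} (v : Fin n → Bool) : Word := List.ofFn v

lemma wd_length {n : ℕ} (v : Fin n → Bool) : (wd v).length = n := by
  simp [wd]

lemma wd_injective {n : ℕ} : Function.Injective (wd (n := n)) := fun a b h =>
  List.ofFn_inj.mp h

lemma wd_surj {n : ℕ} {w : Word} (h : w.length = n) : ∃ v : Fin n → Bool, wd v = w := by
  subst h
  exact ⟨fun i => w.get i, List.ofFn_get w⟩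

/-- The rigid vertex stabilizer in `G`. -/
def Rv (u : Word) : Subgroup ↥TreeAut := G ⊓ ristSubgroup u

/-- Its commutator subgroup, as a subgroup of `Aut(X*)`. -/
def Cv (u : Word) : Subgroup ↥TreeAut := ⁅Rv G u, Rv G u⁆

lemma Cv_le_Rv (u : Word) : Cv G u ≤ Rv G u :=
  commutator_le.mpr fun g hg h hh =>
    mul_mem (mul_mem (mul_mem hg hh) (inv_mem hg)) (inv_mem hh)

lemma Rv_le_rist (u : Word) : Rv G u ≤ ristSubgroup u := inf_le_right

lemma Rv_le_G (u : Word) : Rv G u ≤ G := inf_le_left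

lemma mem_rist_of_mem_Rv {u : Word} {x : ↥TreeAut} (hx : x ∈ Rv G u) :
    x ∈ ristSubgroup u := hx.2

/-- `Rist_G(n)` as defined in the problem, rewritten. -/
lemma ristLevel_eq (n : ℕ) :
    ristLevel G n = ⨆ u ∈ {u : Word | u.length = n}, Rv G u := rfl

/-- `Rist_G(n)'`: the product of the commutator subgroups of the level-`n`
rigid stabilizers. -/
def DD (n : ℕ) : Subgroup ↥TreeAut :=
  ⨆ u ∈ {u : Word | u.length = n}, Cv G u

lemma Rv_le_ristLevel {n : ℕ} {u : Word} (hu : u.length = n) :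
    Rv G u ≤ ristLevel G n :=
  le_iSup₂ (f := fun u (_ : u ∈ {u : Word | u.length = n}) => G ⊓ ristSubgroup u) u hu

lemma Cv_le_DD {n : ℕ} {u : Word} (hu : u.length = n) : Cv G u ≤ DD G n :=
  le_iSup₂ (f := fun u (_ : u ∈ {u : Word | u.length = n}) => Cv G u) u hu

lemma ristLevel_le_G (n : ℕ) : ristLevel G n ≤ G :=
  iSup₂_le fun _ _ => inf_le_left

lemma DD_le_ristLevel (n : ℕ) : DD G n ≤ ristLevel G n :=
  iSup₂_le fun u hu => (Cv_le_Rv G u).trans (Rv_le_ristLevel G hu)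

lemma DD_le_G (n : ℕ) : DD G n ≤ G := (DD_le_ristLevel G n).trans (ristLevel_le_G G n)

lemma comm_of_ne {n : ℕ} {a b : Fin n → Bool} (hab : a ≠ b) {x y : ↥TreeAut}
    (hx : x ∈ ristSubgroup (wd a)) (hy : y ∈ ristSubgroup (wd b)) : Commute x y := by
  have hne : wd a ≠ wd b := fun h => hab (wd_injective h)
  have hlen : (wd a).length = (wd b).length := by rw [wd_length, wd_length]
  exact rist_commute hx hy (not_prefix_of_ne hlen hne)
    (not_prefix_of_ne hlen.symm (Ne.symm hne))

variable {n : ℕ}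

lemma phi_comm (g : ∀ v : Fin n → Bool, ↥(Rv G (wd v))) :
    ((Finset.univ : Finset (Fin n → Bool)) : Set (Fin n → Bool)).Pairwise
      (Function.onFun Commute fun v => ((g v : ↥TreeAut))) :=
  fun a _ b _ hab => comm_of_ne hab (mem_rist_of_mem_Rv G (g a).2)
    (mem_rist_of_mem_Rv G (g b).2)

lemma phi_comm' (a b : ∀ v : Fin n → Bool, ↥(Rv G (wd v))) :
    ∀ x ∈ (Finset.univ : Finset (Fin n → Bool)), ∀ y ∈ (Finset.univ : Finset (Fin n → Bool)),
      x ≠ y → Commute ((b x : ↥TreeAut)) ((a y : ↥TreeAut)) :=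
  fun x _ y _ hxy => comm_of_ne hxy (mem_rist_of_mem_Rv G (b x).2)
    (mem_rist_of_mem_Rv G (a y).2)

/-- The multiplication homomorphism from the product of the level-`n` rigid
stabilizers to `Aut(X*)`. -/
def phi (G : Subgroup ↥TreeAut) (n : ℕ) :
    (∀ v : Fin n → Bool, ↥(Rv G (wd v))) →* ↥TreeAut :=
  MonoidHom.mk' (fun g => Finset.univ.noncommProd (fun v => ((g v : ↥TreeAut)))
      (phi_comm G g))
    (by
      intro a b
      rw [← Finset.noncommProd_mul_distrib _ _
        (phi_comm' G a a) (phi_comm' G b b) (phi_comm' G a b)]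
      exact Finset.noncommProd_congr rfl (fun x _ => rfl) _)

lemma phi_apply (g : ∀ v : Fin n → Bool, ↥(Rv G (wd v))) :
    phi G n g = Finset.univ.noncommProd (fun v => ((g v : ↥TreeAut))) (phi_comm G g) := rfl

lemma phi_mem_ristLevel (g : ∀ v : Fin n → Bool, ↥(Rv G (wd v))) :
    phi G n g ∈ ristLevel G n := by
  rw [phi_apply]
  exact Subgroup.noncommProd_mem _ (phi_comm G g)
    fun v _ => Rv_le_ristLevel G (wd_length v) (g v).2

lemma phi_mulSingle (v : Fin n → Bool) (x : ↥(Rv G (wd v))) :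
    phi G n (Pi.mulSingle v x) = (x : ↥TreeAut) := by
  rw [phi_apply]
  rw [Finset.noncommProd_congr (Finset.insert_erase (Finset.mem_univ v)).symm
    (fun w _ => rfl) (phi_comm G (Pi.mulSingle v x))]
  erw [Finset.noncommProd_insert_of_notMem _ _ _ _ (Finset.notMem_erase v _)]
  rw [Finset.noncommProd_eq_pow_card _ _ _ (1 : ↥TreeAut) ?h1]
  · rw [one_pow, Pi.mulSingle_eq_same, mul_one]
  · intro w hw
    rw [Pi.mulSingle_eq_of_ne (Finset.ne_of_mem_erase hw)]
    rfl

lemma ristLevel_le_range : ristLevel G n ≤ (phi G n).range := by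
  refine iSup₂_le fun u hu => ?_
  obtain ⟨v, rfl⟩ := wd_surj hu
  intro x hx
  exact ⟨Pi.mulSingle v ⟨x, hx⟩, phi_mulSingle G v ⟨x, hx⟩⟩

lemma phi_surj {x : ↥TreeAut} (hx : x ∈ ristLevel G n) :
    ∃ g, phi G n g = x := ristLevel_le_range G hx

/-- The subgroup of the product corresponding to the commutator subgroups. -/
def Kpi (G : Subgroup ↥TreeAut) (n : ℕ) :
    Subgroup (∀ v : Fin n → Bool, ↥(Rv G (wd v))) :=
  Subgroup.pi Set.univ fun v => (Cv G (wd v)).subgroupOf (Rv G (wd v))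

lemma phi_Kpi_mem_DD {g} (hg : g ∈ Kpi G n) : phi G n g ∈ DD G n := by
  rw [phi_apply]
  exact Subgroup.noncommProd_mem _ (phi_comm G g)
    fun v _ => Cv_le_DD G (wd_length v) (hg v (Set.mem_univ v))

lemma phi_Kpi_surj {x : ↥TreeAut} (hx : x ∈ DD G n) :
    ∃ g ∈ Kpi G n, phi G n g = x := by
  have hle : DD G n ≤ Subgroup.map (phi G n) (Kpi G n) := by
    refine iSup₂_le fun u hu => ?_
    obtain ⟨v, rfl⟩ := wd_surj hu
    intro x hx
    refine ⟨Pi.mulSingle v ⟨x, Cv_le_Rv G (wd v) hx⟩,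
      (Subgroup.mem_pi _).mpr fun w _ => ?_, phi_mulSingle G v _⟩
    by_cases hwv : w = v
    · subst hwv
      rw [Pi.mulSingle_eq_same]
      exact Subgroup.mem_subgroupOf.mpr hx
    · rw [Pi.mulSingle_eq_of_ne hwv]
      exact one_mem _
  obtain ⟨g, hg, hgx⟩ := hle hx
  exact ⟨g, hg, hgx⟩

/-- A product of elements of commuting rigid stabilizers which lies in `Rist(u)`
must equal its `u`-component. -/
lemma DD_inf_rist_le_Cv {u : Word} (hu : u.length = n) :
    DD G n ⊓ ristSubgroup u ≤ Cv G u := by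
  rintro x ⟨hxD, hxr⟩
  obtain ⟨g, hg, rfl⟩ := phi_Kpi_surj G hxD
  obtain ⟨v, rfl⟩ := wd_surj hu
  have commerase : ((Finset.univ.erase v : Finset (Fin n → Bool)) :
      Set (Fin n → Bool)).Pairwise (Function.onFun Commute fun w => ((g w : ↥TreeAut))) :=
    Set.Pairwise.mono (by intro w hw; exact Finset.mem_coe.mpr (Finset.mem_univ w))
      (phi_comm G g)
  have hrest : (Finset.univ.erase v).noncommProd
      (fun w => ((g w : ↥TreeAut))) commerase ∈ coristSubgroup (wd v) := by
    refine Subgroup.noncommProd_mem _ _ fun w hw => ?_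
    have hne : wd w ≠ wd v := fun h => (Finset.ne_of_mem_erase hw) (wd_injective h)
    have hlen : (wd v).length = (wd w).length := by rw [wd_length, wd_length]
    exact rist_le_corist (not_prefix_of_ne hlen (Ne.symm hne))
      (not_prefix_of_ne hlen.symm hne) (mem_rist_of_mem_Rv G (g w).2)
  have hsplit : phi G n g = (g v : ↥TreeAut) *
      (Finset.univ.erase v).noncommProd (fun w => ((g w : ↥TreeAut))) commerase := by
    rw [phi_apply]
    rw [Finset.noncommProd_congr (Finset.insert_erase (Finset.mem_univ v)).symm
      (fun w _ => rfl) (phi_comm G g)]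
    erw [Finset.noncommProd_insert_of_notMem _ _ _ _ (Finset.notMem_erase v _)]
  have hxv : phi G n g = (g v : ↥TreeAut) := by
    refine treeaut_ext fun w => ?_
    by_cases hw : wd v <+: w
    · rw [hsplit, ap_mul, hrest w hw]
    · have h1 : ap (phi G n g) w = w := hxr w hw
      have h2 : ap ((g v : ↥TreeAut)) w = w := mem_rist_of_mem_Rv G (g v).2 w hw
      rw [h1, h2]
  rw [hxv]
  exact hg v (Set.mem_univ v)

lemma DD_inf_Rv_eq_Cv {u : Word} (hu : u.length = n) :
    DD G n ⊓ Rv G u = Cv G u := by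
  refine le_antisymm ?_ (le_inf (Cv_le_DD G hu) (Cv_le_Rv G u))
  intro x hx
  exact DD_inf_rist_le_Cv G hu ⟨hx.1, hx.2.2⟩

/-- If all level-`n` commutator subgroups vanish, `Rist(n)` is abelian. -/
lemma ristLevel_comm (hD : DD G n = ⊥) {x y : ↥TreeAut}
    (hx : x ∈ ristLevel G n) (hy : y ∈ ristLevel G n) : Commute x y := by
  obtain ⟨a, rfl⟩ := phi_surj G hx
  obtain ⟨b, rfl⟩ := phi_surj G hy
  have hab : a * b = b * a := by
    funext v
    have h1 : ⁅((a v : ↥TreeAut)), ((b v : ↥TreeAut))⁆ ∈ Cv G (wd v) :=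
      Subgroup.commutator_mem_commutator (a v).2 (b v).2
    have h2 : Cv G (wd v) ≤ ⊥ := hD ▸ Cv_le_DD G (wd_length v)
    have h3 : ⁅((a v : ↥TreeAut)), ((b v : ↥TreeAut))⁆ = 1 :=
      Subgroup.mem_bot.mp (h2 h1)
    have h4 : Commute ((a v : ↥TreeAut)) ((b v : ↥TreeAut)) :=
      commutatorElement_eq_one_iff_commute.mp h3
    show a v * b v = b v * a v
    exact Subtype.ext (by push_cast; exact h4.eq)
  show phi G n a * phi G n b = phi G n b * phi G n a
  rw [← map_mul, ← map_mul, hab]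

/-- If all the level-`n` rigid stabilizers are finite, so is `Rist(n)`. -/
lemma ristLevel_finite (hf : ∀ v : Fin n → Bool, Finite ↥(Rv G (wd v))) :
    Finite ↥(ristLevel G n) := by
  have : Finite (∀ v : Fin n → Bool, ↥(Rv G (wd v))) := Pi.finite
  refine Finite.of_surjective
    (fun g : ∀ v : Fin n → Bool, ↥(Rv G (wd v)) =>
      (⟨phi G n g, phi_mem_ristLevel G g⟩ : ↥(ristLevel G n))) ?_
  rintro ⟨x, hx⟩
  obtain ⟨g, hg⟩ := phi_surj G hx
  exact ⟨g, Subtype.ext hg⟩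

end S15Phi


section S15Main

open Subgroup
open scoped commutatorElement

variable (G : Subgroup ↥TreeAut)

/-- Conjugation inside `G` moves rigid vertex stabilizers along the `G`-action. -/
lemma conj_Rv {x : ↥TreeAut} (hx : x ∈ G) (u : Word) :
    Subgroup.map (MulAut.conj x).toMonoidHom (Rv G u) = Rv G (ap x u) := by
  apply le_antisymm
  · rintro _ ⟨y, hy, rfl⟩
    have hmem : x * y * x⁻¹ ∈ Rv G (ap x u) :=
      ⟨G.mul_mem (G.mul_mem hx hy.1) (G.inv_mem hx), conj_mem_rist hy.2⟩
    simpa using hmem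
  · intro z hz
    refine ⟨x⁻¹ * z * x, ⟨G.mul_mem (G.mul_mem (G.inv_mem hx) hz.1) hx, ?_⟩, by
      show x * (x⁻¹ * z * x) * x⁻¹ = z
      group⟩
    have h1 : x⁻¹ * z * (x⁻¹)⁻¹ ∈ ristSubgroup (ap x⁻¹ (ap x u)) := conj_mem_rist hz.2
    rw [ap_inv_ap] at h1
    simpa using h1

lemma conj_mem_DD {n : ℕ} {x : ↥TreeAut} (hx : x ∈ G) {y : ↥TreeAut} (hy : y ∈ DD G n) :
    x * y * x⁻¹ ∈ DD G n := by
  have hle : Subgroup.map (MulAut.conj x).toMonoidHom (DD G n) ≤ DD G n := by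
    rw [DD, Subgroup.map_iSup]
    refine iSup_le fun u => ?_
    rw [Subgroup.map_iSup]
    refine iSup_le fun hu => ?_
    rw [Cv, Subgroup.map_commutator, conj_Rv G hx u]
    exact Cv_le_DD G (by rw [ap_length]; exact hu)
  exact hle ⟨y, hy, rfl⟩

/-- The key commutator computation: if a subgroup `M` normalized by `G` contains an
element moving the vertex `u`, then it contains the commutator subgroup of `Rist_G(u)`. -/
lemma key_commutator {M : Subgroup ↥TreeAut} (hM : ∀ x ∈ G, ∀ y ∈ M, x * y * x⁻¹ ∈ M)
    {g' : ↥TreeAut} {u : Word} (hg' : g' ∈ M) (hmove : ap g' u ≠ u) :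
    Cv G u ≤ M := by
  have H : ∀ h ∈ Rv G u, ∀ k ∈ Rv G u, ⁅h⁻¹, k⁆ ∈ M := by
    intro h hh k hk
    have hhr : h ∈ ristSubgroup u := hh.2
    have hkr : k ∈ ristSubgroup u := hk.2
    set x := g' * h * g'⁻¹ with hxdef
    have hxr : x ∈ ristSubgroup (ap g' u) := conj_mem_rist hhr
    have hlen : (ap g' u).length = u.length := ap_length g' u
    have h1 : ¬ ap g' u <+: u := not_prefix_of_ne hlen hmove
    have h2 : ¬ u <+: ap g' u := not_prefix_of_ne hlen.symm (Ne.symm hmove)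
    have hxk : Commute x k := rist_commute hxr hkr h1 h2
    have hbr : ⁅h⁻¹, k⁆ ∈ ristSubgroup u := by
      have hi : h⁻¹ ∈ ristSubgroup u := (ristSubgroup u).inv_mem hhr
      rw [commutatorElement_def]
      exact (ristSubgroup u).mul_mem ((ristSubgroup u).mul_mem
        ((ristSubgroup u).mul_mem hi hkr) ((ristSubgroup u).inv_mem hi))
        ((ristSubgroup u).inv_mem hkr)
    have hcomm2 : Commute x ⁅h⁻¹, k⁆ := rist_commute hxr hbr h1 h2
    set c := ⁅g', h⁆ with hcdef
    have hcM : c ∈ M := by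
      have e : c = g' * (h * g'⁻¹ * h⁻¹) := by
        rw [hcdef, commutatorElement_def]; group
      rw [e]
      exact mul_mem hg' (hM h hh.1 g'⁻¹ (inv_mem hg'))
    have hckM : ⁅c, k⁆ ∈ M := by
      have e : ⁅c, k⁆ = c * (k * c⁻¹ * k⁻¹) := by
        rw [commutatorElement_def]; group
      rw [e]
      exact mul_mem hcM (hM k hk.1 c⁻¹ (inv_mem hcM))
    have hkey : ⁅c, k⁆ = ⁅h⁻¹, k⁆ := by
      have e1 : c = x * h⁻¹ := by rw [hcdef, commutatorElement_def, hxdef]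
      have e2 : x⁻¹ * k⁻¹ = k⁻¹ * x⁻¹ := (hxk.inv_inv).eq
      have e3 : x * ⁅h⁻¹, k⁆ = ⁅h⁻¹, k⁆ * x := hcomm2.eq
      rw [commutatorElement_def, e1, commutatorElement_def]
      calc x * h⁻¹ * k * (x * h⁻¹)⁻¹ * k⁻¹
          = x * (h⁻¹ * k * h) * (x⁻¹ * k⁻¹) := by group
        _ = x * (h⁻¹ * k * h) * (k⁻¹ * x⁻¹) := by rw [e2]
        _ = x * (h⁻¹ * k * (h⁻¹)⁻¹ * k⁻¹) * x⁻¹ := by group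
        _ = x * ⁅h⁻¹, k⁆ * x⁻¹ := by rw [← commutatorElement_def]
        _ = ⁅h⁻¹, k⁆ * x * x⁻¹ := by rw [e3]
        _ = ⁅h⁻¹, k⁆ := mul_inv_cancel_right _ _
    rw [← hkey]
    exact hckM
  refine commutator_le.mpr fun h hh k hk => ?_
  simpa using H h⁻¹ (inv_mem hh) k hk

/-- The abelianization of a subgroup is finite iff the commutator subgroup (viewed
in the ambient group) has finite relative index. -/
lemma commutator_index {Γ : Type*} [Group Γ] (H : Subgroup Γ) :
    (commutator ↥H).index = (⁅H, H⁆).relIndex H := by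
  have h1 : Subgroup.map H.subtype (commutator ↥H) = ⁅H, H⁆ := by
    rw [_root_.commutator_def, Subgroup.map_commutator]
    congr 1 <;>
    · rw [← MonoidHom.range_eq_map, Subgroup.range_subtype]
  have h2 : (⁅H, H⁆).subgroupOf H = commutator ↥H := by
    rw [← h1]
    exact Subgroup.comap_map_eq_self_of_injective (Subgroup.subtype_injective H) _
  rw [Subgroup.relIndex, h2]

/-- A level-transitive subgroup of `Aut(X*)` is infinite. -/
lemma G_infinite (hlt : LevelTransitive G) : Infinite ↥G := by
  by_contra hinf
  rw [not_infinite_iff_finite] at hinf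
  set m := Nat.card ↥G with hm
  have hchoice : ∀ v : Fin m → Bool, ∃ g : ↥TreeAut, g ∈ G ∧
      ap g (wd (fun _ : Fin m => false)) = wd v := by
    intro v
    obtain ⟨g, hg, hgw⟩ := hlt (wd (fun _ : Fin m => false)) (wd v)
      (by rw [wd_length, wd_length])
    exact ⟨g, hg, hgw⟩
  choose f hfG hfap using hchoice
  have hinj : Function.Injective (fun v : Fin m → Bool => (⟨f v, hfG v⟩ : ↥G)) := by
    intro a b hab
    apply wd_injective
    rw [← hfap a, ← hfap b]
    have : f a = f b := congrArg Subtype.val hab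
    rw [this]
  have hle := Nat.card_le_card_of_injective _ hinj
  have hcard : Nat.card (Fin m → Bool) = 2 ^ m := by
    rw [Nat.card_eq_fintype_card, Fintype.card_fun]
    simp
  rw [hcard, ← hm] at hle
  exact absurd hle (Nat.not_le.mpr (Nat.lt_two_pow_self (n := m)))

lemma exists_ne_one_of_ne_bot {Γ : Type*} [Group Γ] {H : Subgroup Γ} (h : H ≠ ⊥) :
    ∃ x ∈ H, x ≠ 1 := by
  by_contra hc
  push_neg at hc
  exact h ((Subgroup.eq_bot_iff_forall H).mpr hc)

lemma ne_bot_of_infinite {Γ : Type*} [Group Γ] {H : Subgroup Γ} (h : Infinite ↥H) :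
    H ≠ ⊥ := by
  rintro rfl
  have : Subsingleton ↥(⊥ : Subgroup Γ) :=
    ⟨fun a b => Subtype.ext (by rw [Subgroup.mem_bot.mp a.2, Subgroup.mem_bot.mp b.2])⟩
  exact absurd (Finite.of_subsingleton) (not_finite_iff_infinite.mpr h)

/-- If `H` has finite relative index in `K` and `H ⊓ K` is finite, then `K` is finite. -/
lemma finite_of_relindex_ne_zero {Γ : Type*} [Group Γ] {H K : Subgroup Γ}
    (h : H.relIndex K ≠ 0) (hfin : Finite ↥(H ⊓ K)) : Finite ↥K := by
  have hcard := Subgroup.card_eq_card_quotient_mul_card_subgroup (H.subgroupOf K)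
  have h1 : Nat.card (↥K ⧸ H.subgroupOf K) = H.relIndex K :=
    (Subgroup.index_eq_card _).symm
  have h2 : Nat.card ↥(H.subgroupOf K) = Nat.card ↥(H ⊓ K) := by
    rw [← Subgroup.inf_subgroupOf_right]
    exact Nat.card_congr (Subgroup.subgroupOfEquivOfLe inf_le_right).toEquiv
  have h3 : Nat.card ↥(H ⊓ K) ≠ 0 :=
    Nat.card_ne_zero.mpr ⟨⟨⟨1, one_mem _⟩⟩, hfin⟩
  apply Nat.finite_of_card_ne_zero
  rw [hcard, h1, h2]
  exact mul_ne_zero h h3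

lemma ristLevel_infinite (hG : Infinite ↥G) {n : ℕ}
    (h : (ristLevel G n).relIndex G ≠ 0) : Infinite ↥(ristLevel G n) := by
  by_contra hfin
  rw [not_infinite_iff_finite] at hfin
  have hfin2 : Finite ↥(ristLevel G n ⊓ G) := by
    rw [inf_of_le_left (ristLevel_le_G G n)]
    exact hfin
  exact absurd (finite_of_relindex_ne_zero h hfin2) (not_finite_iff_infinite.mpr hG)

lemma Rv_infinite_transfer {x : ↥TreeAut} (hx : x ∈ G) {u : Word}
    (h : Infinite ↥(Rv G u)) : Infinite ↥(Rv G (ap x u)) := by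
  rw [← conj_Rv G hx u]
  exact Infinite.of_injective _
    (Subgroup.equivMapOfInjective (Rv G u) (MulAut.conj x).toMonoidHom
      (MulAut.conj x).injective).injective

lemma Kpi_index_ne_zero {n : ℕ}
    (h : ∀ v : Fin n → Bool, (Cv G (wd v)).relIndex (Rv G (wd v)) ≠ 0) :
    (Kpi G n).index ≠ 0 := by
  have heq : Kpi G n = ⨅ v : Fin n → Bool,
      Subgroup.comap (Pi.evalMonoidHom (fun v : Fin n → Bool => ↥(Rv G (wd v))) v)
        ((Cv G (wd v)).subgroupOf (Rv G (wd v))) := by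
    ext g
    simp [Kpi, Subgroup.mem_pi, Subgroup.mem_iInf, Subgroup.mem_comap, Pi.evalMonoidHom]
  rw [heq]
  refine Subgroup.index_iInf_ne_zero fun v => ?_
  rw [Subgroup.index_comap]
  have hsurj : Function.Surjective
      (Pi.evalMonoidHom (fun v : Fin n → Bool => ↥(Rv G (wd v))) v) := fun y =>
    ⟨Pi.mulSingle v y, by simp [Pi.evalMonoidHom]⟩
  rw [MonoidHom.range_eq_top_of_surjective _ hsurj, Subgroup.relIndex_top_right]
  exact h v

lemma DD_relindex_ne_zero {n : ℕ}
    (h : ∀ u : Word, u.length = n → (Cv G u).relIndex (Rv G u) ≠ 0) :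
    (DD G n).relIndex (ristLevel G n) ≠ 0 := by
  have hKpi : (Kpi G n).index ≠ 0 := Kpi_index_ne_zero G fun v => h _ (wd_length v)
  set R := ristLevel G n with hR
  let φ' : (∀ v : Fin n → Bool, ↥(Rv G (wd v))) →* ↥R :=
    (phi G n).codRestrict R (phi_mem_ristLevel G)
  have hφs : Function.Surjective φ' := by
    rintro ⟨x, hx⟩
    obtain ⟨g, hg⟩ := phi_surj G hx
    exact ⟨g, Subtype.ext hg⟩
  have h1 : ((Kpi G n).map φ').index ∣ (Kpi G n).index :=
    Subgroup.index_map_dvd _ hφs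
  have h2 : (Kpi G n).map φ' ≤ (DD G n).subgroupOf R := by
    rintro _ ⟨g, hg, rfl⟩
    exact Subgroup.mem_subgroupOf.mpr (phi_Kpi_mem_DD G hg)
  have h3 : ((DD G n).subgroupOf R).index ∣ ((Kpi G n).map φ').index :=
    Subgroup.index_dvd_of_le h2
  intro h0
  exact hKpi (Nat.eq_zero_of_zero_dvd (h0 ▸ (h3.trans h1)))

end S15Main

/-- a branch group `G ≤ Aut(X*)` is just-infinite iff for every word
`u` the rigid stabilizer `Rist_G(u)` has finite abelianization, i.e. its commutator
subgroup has finite index. -/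
theorem statement15 (G : Subgroup ↥TreeAut) (hlt : LevelTransitive G)
    (hfi : ∀ n : ℕ, (ristLevel G n).relIndex G ≠ 0) :
    (∀ N : Subgroup ↥G, N.Normal → N ≠ ⊥ → N.FiniteIndex) ↔
      ∀ u : Word, (commutator ↥(G ⊓ ristSubgroup u : Subgroup ↥TreeAut)).FiniteIndex := by
  have hGinf : Infinite ↥G := G_infinite G hlt
  constructor
  · intro hJI u
    set n := u.length with hn
    by_cases hD : DD G n = ⊥
    · exfalso
      have hRinf : Infinite ↥(ristLevel G n) := ristLevel_infinite G hGinf (hfi n)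
      obtain ⟨x, hxA, hx1⟩ := exists_ne_one_of_ne_bot (ne_bot_of_infinite hRinf)
      obtain ⟨t, ht⟩ := exists_moved hx1
      set m := t.length with hm
      have hRm : Infinite ↥(ristLevel G m) := ristLevel_infinite G hGinf (hfi m)
      have hv : ∃ v : Fin m → Bool, Infinite ↥(Rv G (wd v)) := by
        by_contra hc
        push_neg at hc
        have hfinv : ∀ v : Fin m → Bool, Finite ↥(Rv G (wd v)) := fun v =>
          hc v
        exact absurd (ristLevel_finite G hfinv) (not_finite_iff_infinite.mpr hRm)
      obtain ⟨v, hvinf⟩ := hv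
      obtain ⟨g, hgG, hgv⟩ := hlt (wd v) t (by rw [wd_length, hm])
      have hRt : Infinite ↥(Rv G t) := by
        rw [← hgv]
        exact Rv_infinite_transfer G hgG hvinf
      have hrel : (ristLevel G n).relIndex (Rv G t) ≠ 0 := fun h0 =>
        hfi n (Subgroup.relIndex_eq_zero_of_le_right (Rv_le_G G t) h0)
      have hzex : ∃ z ∈ ristLevel G n ⊓ Rv G t, z ≠ 1 := by
        refine exists_ne_one_of_ne_bot (ne_bot_of_infinite ?_)
        by_contra hc
        rw [not_infinite_iff_finite] at hc
        exact absurd (finite_of_relindex_ne_zero hrel hc)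
          (not_finite_iff_infinite.mpr hRt)
      obtain ⟨z, hz, hz1⟩ := hzex
      have hzA : z ∈ ristLevel G n := hz.1
      have hzt : z ∈ ristSubgroup t := hz.2.2
      obtain ⟨s, hs⟩ := exists_moved hz1
      have hts : t <+: s := by
        by_contra hc
        exact hs (hzt s hc)
      have hcomm : Commute x z := ristLevel_comm G hD hxA hzA
      have hlen2 : (ap x t).length = t.length := ap_length x t
      have hxs : ap x t <+: ap x s := (ap_prefix_iff x t s).mp hts
      have hnt : ¬ t <+: ap x s := fun h =>
        ht (eq_of_prefix_prefix hlen2 hxs h)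
      have h1 : ap z (ap x s) = ap x s := hzt _ hnt
      have h2 : ap x (ap z s) = ap z (ap x s) := by
        rw [← ap_mul, ← ap_mul, hcomm.eq]
      rw [h1] at h2
      exact hs (ap_injective x h2)
    · set N := (DD G n).subgroupOf G with hN
      have hnormal : N.Normal := by
        constructor
        intro a ha g
        rw [hN, Subgroup.mem_subgroupOf] at ha ⊢
        have hc : (g : ↥TreeAut) * a * (g : ↥TreeAut)⁻¹ ∈ DD G n := conj_mem_DD G g.2 ha
        simpa using hc
      have hne : N ≠ ⊥ := by
        obtain ⟨y, hy, hy1⟩ := exists_ne_one_of_ne_bot hD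
        intro h0
        have hyG : y ∈ G := DD_le_G G n hy
        have hyN : (⟨y, hyG⟩ : ↥G) ∈ N := Subgroup.mem_subgroupOf.mpr hy
        rw [h0, Subgroup.mem_bot] at hyN
        exact hy1 (congrArg Subtype.val hyN)
      have hfin := hJI N hnormal hne
      have hrelG : (DD G n).relIndex G ≠ 0 := hfin.index_ne_zero
      have hrelRu : (DD G n).relIndex (G ⊓ ristSubgroup u) ≠ 0 := fun h0 =>
        hrelG (Subgroup.relIndex_eq_zero_of_le_right inf_le_left h0)
      have heq : DD G n ⊓ Rv G u = Cv G u := DD_inf_Rv_eq_Cv G hn.symm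
      have h1 : (Cv G u).relIndex (Rv G u) ≠ 0 := by
        rw [← heq, Subgroup.inf_relIndex_right]
        exact hrelRu
      exact ⟨by rw [commutator_index]; exact h1⟩
  · intro hCom N hNnorm hNne
    set M := Subgroup.map G.subtype N with hM
    have hMconj : ∀ x ∈ G, ∀ y ∈ M, x * y * x⁻¹ ∈ M := by
      rintro x hx _ ⟨a, ha, rfl⟩
      exact ⟨⟨x, hx⟩ * a * ⟨x, hx⟩⁻¹, hNnorm.conj_mem a ha ⟨x, hx⟩, rfl⟩
    obtain ⟨a, haN, ha1⟩ := exists_ne_one_of_ne_bot hNne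
    have haM : (a : ↥TreeAut) ∈ M := ⟨a, haN, rfl⟩
    have ha1' : (a : ↥TreeAut) ≠ 1 := fun h => ha1 (Subtype.ext h)
    obtain ⟨t, ht⟩ := exists_moved ha1'
    set n := t.length with hn
    have hDDM : DD G n ≤ M := by
      refine iSup₂_le fun u hu => ?_
      obtain ⟨g, hgG, hgt⟩ := hlt t u (by rw [hu, ← hn])
      have hg'M : g * (a : ↥TreeAut) * g⁻¹ ∈ M := hMconj g hgG _ haM
      have hmove : ap (g * (a : ↥TreeAut) * g⁻¹) u ≠ u := by
        rw [ap_mul, ap_mul, ← hgt, ap_inv_ap]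
        intro h
        exact ht (ap_injective g h)
      exact key_commutator G hMconj hg'M hmove
    have hCrel : ∀ w : Word, w.length = n → (Cv G w).relIndex (Rv G w) ≠ 0 := by
      intro w _
      have hidx := (hCom w).index_ne_zero
      rw [commutator_index] at hidx
      exact hidx
    have hDR : (DD G n).relIndex (ristLevel G n) ≠ 0 := DD_relindex_ne_zero G hCrel
    have hDG : (DD G n).relIndex G ≠ 0 := by
      rw [← Subgroup.relIndex_mul_relIndex (DD G n) (ristLevel G n) G
        (DD_le_ristLevel G n) (ristLevel_le_G G n)]
      exact mul_ne_zero hDR (hfi n)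
    have hMrel : M.relIndex G ≠ 0 := fun h0 =>
      hDG (Subgroup.relIndex_eq_zero_of_le_left hDDM h0)
    refine ⟨?_⟩
    have hMN : M.subgroupOf G = N :=
      Subgroup.comap_map_eq_self_of_injective (Subgroup.subtype_injective G) N
    rw [← hMN]
    exact hMrel
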